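/- Let n ≥ 3, let f = ((a_α, A_α))_{α=1}^m and g = ((b_β, B_β))_{β=1}^{m'} be DER data on the unit sphere S^{n−1} ⊆ ℝⁿ, and let p ∈ S^{n−1} satisfy 0 < d(A_α, p) < π and 0 < d(B_β, p) < π for all α, β. For a nonempty compact A ⊆ S^{n−1} with 0 < d(A,p) < π, let A′_p := {(a − ⟨a,p⟩p)/‖a − ⟨a,p⟩p‖ : a ∈ A, d(a,p) = d(A,p)}, a nonempty compact subset of the unit sphere Σ_p of the orthogonal complement of p. Define the differential data f′_p := ((a_α · sin d(A_α,p), (A_α)′_p))_α and g′_p := ((b_β · sin d(B_β,p), (B_β)′_p))_β, which are DER data on Σ_p. Then ⟨f′_p, g′_p⟩ ≤ ⟨f, g⟩ − f(p)·g(p), where the scalar product of data on Σ_p is given by the same formula Σ weights times sup of inner products of pairs from the sets. -/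

import Mathlib

open scoped InnerProductSpace

noncomputable section

/-- DER data on the unit sphere of `EuclideanSpace ℝ (Fin n)`: a finite family of
nonempty compact subsets of the sphere together with nonnegative weights summing to at most 1. -/
structure DERData (n : ℕ) where
  m : ℕ
  w : Fin m → ℝ
  A : Fin m → Set (EuclideanSpace ℝ (Fin n))
  nonempty' : ∀ α, (A α).Nonempty
  compact' : ∀ α, IsCompact (A α)
  subset_sphere : ∀ α, A α ⊆ Metric.sphere (0 : EuclideanSpace ℝ (Fin n)) 1
  nonneg : ∀ α, 0 ≤ w α
  sum_le_one : ∑ α, w α ≤ 1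

/-- The DER function of DER data: `f(x) = -∑ a_α cos d(A_α, x) = -∑ a_α sup_{a ∈ A_α} ⟪a, x⟫`. -/
def DERData.toFun {n : ℕ} (f : DERData n) (x : EuclideanSpace ℝ (Fin n)) : ℝ :=
  -∑ α, f.w α * sSup ((fun a => ⟪a, x⟫_ℝ) '' f.A α)

/-- The scalar product of two DER data:
`⟨f,g⟩ = ∑_{α,β} a_α b_β cos d(A_α, B_β) = ∑_{α,β} a_α b_β sup_{a ∈ A_α, b ∈ B_β} ⟪a, b⟫`. -/
def DERData.sprod {n : ℕ} (f g : DERData n) : ℝ :=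
  ∑ α, ∑ β, f.w α * g.w β * sSup (Set.image2 (fun a b => ⟪a, b⟫_ℝ) (f.A α) (g.A β))


/-- `cos d(A, x) = sup_{a ∈ A} ⟪a, x⟫` for a set `A` on the sphere. -/
def cosSet {n : ℕ} (A : Set (EuclideanSpace ℝ (Fin n))) (x : EuclideanSpace ℝ (Fin n)) : ℝ :=
  sSup ((fun a => ⟪a, x⟫_ℝ) '' A)

/-- The angular distance `d(A, x) = inf_{a ∈ A} arccos ⟪a, x⟫ = arccos (cos d(A, x))`. -/
def distSet {n : ℕ} (A : Set (EuclideanSpace ℝ (Fin n))) (x : EuclideanSpace ℝ (Fin n)) : ℝ :=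
  Real.arccos (cosSet A x)

/-- The set `A′_p` of directions at `p` of shortest paths from `p` to `A`: the normalized
tangential components of the points of `A` nearest to `p`. -/
def dirSet {n : ℕ} (A : Set (EuclideanSpace ℝ (Fin n))) (p : EuclideanSpace ℝ (Fin n)) :
    Set (EuclideanSpace ℝ (Fin n)) :=
  (fun a => ‖a - ⟪a, p⟫_ℝ • p‖⁻¹ • (a - ⟪a, p⟫_ℝ • p)) ''
    {a ∈ A | Real.arccos ⟪a, p⟫_ℝ = distSet A p}


section Aux

variable {n : ℕ}

lemma inner_abs_le_one {a p : EuclideanSpace ℝ (Fin n)} (ha : ‖a‖ = 1) (hp : ‖p‖ = 1) :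
    |⟪a, p⟫_ℝ| ≤ 1 := by
  have := abs_real_inner_le_norm a p
  rw [ha, hp] at this; linarith

lemma bdd_image {A : Set (EuclideanSpace ℝ (Fin n))} (hAs : A ⊆ Metric.sphere 0 1)
    {p : EuclideanSpace ℝ (Fin n)} (hp : ‖p‖ = 1) :
    BddAbove ((fun a => ⟪a, p⟫_ℝ) '' A) := by
  refine ⟨1, ?_⟩
  rintro x ⟨a, haA, rfl⟩
  have := inner_abs_le_one (mem_sphere_zero_iff_norm.1 (hAs haA)) hp
  have := abs_le.1 this
  exact this.2

lemma cos_distSet {A : Set (EuclideanSpace ℝ (Fin n))} (hA : A.Nonempty)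
    (hAs : A ⊆ Metric.sphere 0 1)
    {p : EuclideanSpace ℝ (Fin n)} (hp : ‖p‖ = 1) : Real.cos (distSet A p) = cosSet A p := by
  obtain ⟨a, haA⟩ := hA
  have h1 : |⟪a, p⟫_ℝ| ≤ 1 := inner_abs_le_one (mem_sphere_zero_iff_norm.1 (hAs haA)) hp
  apply Real.cos_arccos
  · have := le_csSup (bdd_image hAs hp) (Set.mem_image_of_mem _ haA)
    have := abs_le.1 h1
    unfold cosSet; linarith [this.1]
  · apply csSup_le ⟨_, Set.mem_image_of_mem _ haA⟩
    rintro x ⟨b, hbA, rfl⟩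
    exact (abs_le.1 (inner_abs_le_one (mem_sphere_zero_iff_norm.1 (hAs hbA)) hp)).2

lemma dirSet_nonempty {A : Set (EuclideanSpace ℝ (Fin n))} (hA : A.Nonempty) (hAc : IsCompact A)
    (hAs : A ⊆ Metric.sphere 0 1) {p : EuclideanSpace ℝ (Fin n)} (hp : ‖p‖ = 1) :
    (dirSet A p).Nonempty := by
  obtain ⟨a, haA, hmax⟩ := hAc.exists_isMaxOn hA
    ((continuous_id.inner continuous_const).continuousOn :
      ContinuousOn (fun a : EuclideanSpace ℝ (Fin n) => ⟪a, p⟫_ℝ) A)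
  refine ⟨_, ⟨a, ⟨haA, ?_⟩, rfl⟩⟩
  unfold distSet cosSet
  congr 1
  exact le_antisymm (le_csSup (bdd_image hAs hp) (Set.mem_image_of_mem _ haA))
    (csSup_le ⟨_, Set.mem_image_of_mem _ haA⟩ (by rintro x ⟨b, hbB, rfl⟩; exact hmax hbB))

/-- spherical law of cosines for minimizers -/
lemma dir_inner {A B : Set (EuclideanSpace ℝ (Fin n))}
    (hAs : A ⊆ Metric.sphere 0 1) (hBs : B ⊆ Metric.sphere 0 1)
    {p : EuclideanSpace ℝ (Fin n)} (hp : ‖p‖ = 1)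
    (hdA : 0 < distSet A p) (hdA' : distSet A p < Real.pi)
    (hdB : 0 < distSet B p) (hdB' : distSet B p < Real.pi)
    {x y : EuclideanSpace ℝ (Fin n)} (hx : x ∈ dirSet A p) (hy : y ∈ dirSet B p) :
    ∃ a ∈ A, ∃ b ∈ B,
      Real.sin (distSet A p) * Real.sin (distSet B p) * ⟪x, y⟫_ℝ
        + Real.cos (distSet A p) * Real.cos (distSet B p) = ⟪a, b⟫_ℝ := by
  obtain ⟨a, ⟨haA, hadist⟩, rfl⟩ := hx
  obtain ⟨b, ⟨hbB, hbdist⟩, rfl⟩ := hy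
  have ha1 : ‖a‖ = 1 := mem_sphere_zero_iff_norm.1 (hAs haA)
  have hb1 : ‖b‖ = 1 := mem_sphere_zero_iff_norm.1 (hBs hbB)
  set ta := ⟪a, p⟫_ℝ with hta_def
  set tb := ⟪b, p⟫_ℝ with htb_def
  have hta : |ta| ≤ 1 := inner_abs_le_one ha1 hp
  have htb : |tb| ≤ 1 := inner_abs_le_one hb1 hp
  have hcosA : Real.cos (distSet A p) = ta := by
    rw [← hadist, Real.cos_arccos (abs_le.1 hta).1 (abs_le.1 hta).2]
  have hcosB : Real.cos (distSet B p) = tb := by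
    rw [← hbdist, Real.cos_arccos (abs_le.1 htb).1 (abs_le.1 htb).2]
  set va := a - ta • p with hva_def
  set vb := b - tb • p with hvb_def
  have hva2 : ‖va‖ ^ 2 = 1 - ta ^ 2 := by
    have h := norm_sub_sq_real a (ta • p)
    rw [real_inner_smul_right, norm_smul, ha1, hp, Real.norm_eq_abs, ← hta_def] at h
    rw [hva_def, h, mul_one, sq_abs]; ring
  have hvb2 : ‖vb‖ ^ 2 = 1 - tb ^ 2 := by
    have h := norm_sub_sq_real b (tb • p)
    rw [real_inner_smul_right, norm_smul, hb1, hp, Real.norm_eq_abs, ← htb_def] at h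
    rw [hvb_def, h, mul_one, sq_abs]; ring
  have hsinA : Real.sin (distSet A p) = ‖va‖ := by
    rw [← hadist, Real.arccos, Real.sin_pi_div_two_sub, Real.cos_arcsin,
      ← hva2, Real.sqrt_sq (norm_nonneg _)]
  have hsinB : Real.sin (distSet B p) = ‖vb‖ := by
    rw [← hbdist, Real.arccos, Real.sin_pi_div_two_sub, Real.cos_arcsin,
      ← hvb2, Real.sqrt_sq (norm_nonneg _)]
  have hsApos : (0:ℝ) < Real.sin (distSet A p) := Real.sin_pos_of_pos_of_lt_pi hdA hdA'
  have hsBpos : (0:ℝ) < Real.sin (distSet B p) := Real.sin_pos_of_pos_of_lt_pi hdB hdB'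
  have hvane : ‖va‖ ≠ 0 := by rw [← hsinA]; exact hsApos.ne'
  have hvbne : ‖vb‖ ≠ 0 := by rw [← hsinB]; exact hsBpos.ne'
  refine ⟨a, haA, b, hbB, ?_⟩
  have hvv : ⟪va, vb⟫_ℝ = ⟪a, b⟫_ℝ - ta * tb := by
    rw [hva_def, hvb_def]
    rw [inner_sub_left, inner_sub_right, inner_sub_right, real_inner_smul_left,
      real_inner_smul_left, real_inner_smul_right, real_inner_smul_right,
      real_inner_self_eq_norm_sq, hp]
    have hpb : ⟪p, b⟫_ℝ = tb := (real_inner_comm b p).trans htb_def.symm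
    simp only [← hta_def, ← htb_def, hpb]
    ring
  rw [real_inner_smul_left, real_inner_smul_right, hsinA, hsinB, hvv, hcosA, hcosB]
  have key : ∀ (u v c d : ℝ), u ≠ 0 → v ≠ 0 →
      u * v * (u⁻¹ * (v⁻¹ * (c - d))) + d = c := by
    intro u v c d hu hv; field_simp; ring
  exact key _ _ _ _ hvane hvbne

lemma bdd_image2 {A B : Set (EuclideanSpace ℝ (Fin n))} (hAs : A ⊆ Metric.sphere 0 1)
    (hBs : B ⊆ Metric.sphere 0 1) :
    BddAbove (Set.image2 (fun a b => ⟪a, b⟫_ℝ) A B) := by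
  refine ⟨1, ?_⟩
  rintro x ⟨a, haA, b, hbB, rfl⟩
  exact (abs_le.1 (inner_abs_le_one (mem_sphere_zero_iff_norm.1 (hAs haA))
    (mem_sphere_zero_iff_norm.1 (hBs hbB)))).2

lemma key_ineq {A B : Set (EuclideanSpace ℝ (Fin n))} (hA : A.Nonempty) (hAc : IsCompact A)
    (hAs : A ⊆ Metric.sphere 0 1) (hB : B.Nonempty) (hBc : IsCompact B)
    (hBs : B ⊆ Metric.sphere 0 1) {p : EuclideanSpace ℝ (Fin n)} (hp : ‖p‖ = 1)
    (hdA : 0 < distSet A p) (hdA' : distSet A p < Real.pi)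
    (hdB : 0 < distSet B p) (hdB' : distSet B p < Real.pi) :
    Real.sin (distSet A p) * Real.sin (distSet B p) *
        sSup (Set.image2 (fun a b => ⟪a, b⟫_ℝ) (dirSet A p) (dirSet B p))
      + Real.cos (distSet A p) * Real.cos (distSet B p)
      ≤ sSup (Set.image2 (fun a b => ⟪a, b⟫_ℝ) A B) := by
  set S := sSup (Set.image2 (fun a b => ⟪a, b⟫_ℝ) A B) with hS
  set sA := Real.sin (distSet A p)
  set sB := Real.sin (distSet B p)
  have hsApos : (0:ℝ) < sA := Real.sin_pos_of_pos_of_lt_pi hdA hdA'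
  have hsBpos : (0:ℝ) < sB := Real.sin_pos_of_pos_of_lt_pi hdB hdB'
  obtain ⟨x0, hx0⟩ := dirSet_nonempty hA hAc hAs hp
  obtain ⟨y0, hy0⟩ := dirSet_nonempty hB hBc hBs hp
  have hD : sSup (Set.image2 (fun a b => ⟪a, b⟫_ℝ) (dirSet A p) (dirSet B p))
      ≤ (S - Real.cos (distSet A p) * Real.cos (distSet B p)) / (sA * sB) := by
    apply csSup_le ⟨_, Set.mem_image2_of_mem hx0 hy0⟩
    rintro z ⟨x, hx, y, hy, rfl⟩
    obtain ⟨a, haA, b, hbB, heq⟩ := dir_inner hAs hBs hp hdA hdA' hdB hdB' hx hy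
    rw [le_div_iff₀ (by positivity)]
    have hab : ⟪a, b⟫_ℝ ≤ S := le_csSup (bdd_image2 hAs hBs) (Set.mem_image2_of_mem haA hbB)
    nlinarith [heq, hab]
  have := (le_div_iff₀ (by positivity : (0:ℝ) < sA * sB)).1 hD
  nlinarith [this]

end Aux

/-- Property (der1) (round-sphere case): `⟨f′_p, g′_p⟩ ≤ ⟨f, g⟩ - f(p)·g(p)`, where
`f′_p = ((a_α sin d(A_α,p), (A_α)′_p))_α` and `g′_p = ((b_β sin d(B_β,p), (B_β)′_p))_β`
are the differentials of `f` and `g` at `p`, DER data on the unit sphere `Σ_p` of `p^⊥`. -/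
theorem stmt_7 (n : ℕ) (hn : 3 ≤ n) (f g : DERData n)
    (p : EuclideanSpace ℝ (Fin n)) (hp : ‖p‖ = 1)
    (hf : ∀ α, 0 < distSet (f.A α) p ∧ distSet (f.A α) p < Real.pi)
    (hg : ∀ β, 0 < distSet (g.A β) p ∧ distSet (g.A β) p < Real.pi) :
    (∑ α, ∑ β, (f.w α * Real.sin (distSet (f.A α) p)) *
        (g.w β * Real.sin (distSet (g.A β) p)) *
        sSup (Set.image2 (fun a b => ⟪a, b⟫_ℝ) (dirSet (f.A α) p) (dirSet (g.A β) p)))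
      ≤ f.sprod g - f.toFun p * g.toFun p := by
  have hfp : f.toFun p = -∑ α, f.w α * Real.cos (distSet (f.A α) p) := by
    unfold DERData.toFun
    congr 1
    refine Finset.sum_congr rfl fun α _ => ?_
    rw [cos_distSet (f.nonempty' α) (f.subset_sphere α) hp, cosSet]
  have hgp : g.toFun p = -∑ β, g.w β * Real.cos (distSet (g.A β) p) := by
    unfold DERData.toFun
    congr 1
    refine Finset.sum_congr rfl fun β _ => ?_
    rw [cos_distSet (g.nonempty' β) (g.subset_sphere β) hp, cosSet]
  rw [hfp, hgp, DERData.sprod, neg_mul_neg, Finset.sum_mul_sum, ← Finset.sum_sub_distrib]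
  apply Finset.sum_le_sum
  intro α _
  rw [← Finset.sum_sub_distrib]
  apply Finset.sum_le_sum
  intro β _
  have key := key_ineq (f.nonempty' α) (f.compact' α) (f.subset_sphere α)
    (g.nonempty' β) (g.compact' β) (g.subset_sphere β) hp
    (hf α).1 (hf α).2 (hg β).1 (hg β).2
  have h := mul_le_mul_of_nonneg_left key (mul_nonneg (f.nonneg α) (g.nonneg β))
  nlinarith [h]


end
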